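/- Define nested subspaces Φ_{0,j} = range B_j for j = 1,…,N, and Φ_{i,j} = A_j · (Σ_{k=1}^{j} Φ_{i-1,k}) for i ≥ 1. Let W_i = Σ_{k=0}^{i} Σ_{j=1}^{N} Φ_{k,j}. Then the sequence (W_i) is increasing (W_i ⊆ W_{i+1}), and W_j = W_{N(n-1)} for all j ≥ N(n−1); moreover W_{N(n-1)} equals Ω̄ = Σ over k=1,…,N and exponent tuples j_k,…,j_N ∈ {0,…,n−1} of A_N^{j_N} ⋯ A_k^{j_k} (range B_k). -/

import Mathlib

open MeasureTheory

/-- The controllable subspace `⟨A|B⟩ = Σ_{i=0}^{n-1} A^i (range B)`. -/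
def ctrlSub {n m : ℕ} (A : Matrix (Fin n) (Fin n) ℝ) (B : Matrix (Fin n) (Fin m) ℝ) :
    Submodule ℝ (Fin n → ℝ) :=
  ⨆ i : Fin n, Submodule.map ((A ^ (i : ℕ)).mulVecLin) (LinearMap.range B.mulVecLin)

/-- `Γ_A V = Σ_{i=0}^{n-1} A^i V`. -/
def gammaSub {n : ℕ} (A : Matrix (Fin n) (Fin n) ℝ) (V : Submodule ℝ (Fin n → ℝ)) :
    Submodule ℝ (Fin n → ℝ) :=
  ⨆ i : Fin n, Submodule.map ((A ^ (i : ℕ)).mulVecLin) V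

/-- Descending ordered product `E (b-1) * E (b-2) * ⋯ * E a` (equals `1` if `b ≤ a`). -/
def descProd {n : ℕ} (E : ℕ → Matrix (Fin n) (Fin n) ℝ) (a : ℕ) : ℕ → Matrix (Fin n) (Fin n) ℝ
  | 0 => 1
  | b + 1 => if a ≤ b then E b * descProd E a b else 1

/-- Ascending ordered product `F 0 * F 1 * ⋯ * F (b-1)`. -/
def ascProd {n : ℕ} (F : ℕ → Matrix (Fin n) (Fin n) ℝ) : ℕ → Matrix (Fin n) (Fin n) ℝ
  | 0 => 1
  | b + 1 => ascProd F b * F b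

/-- `Ω̄` as in the paper (subsystems indexed from `0`). -/
def omegaBar {n : ℕ} (N : ℕ) (m : ℕ → ℕ) (A : ℕ → Matrix (Fin n) (Fin n) ℝ)
    (B : ∀ i, Matrix (Fin n) (Fin (m i)) ℝ) : Submodule ℝ (Fin n → ℝ) :=
  ⨆ k ∈ Finset.range N, ⨆ j : {f : ℕ → ℕ // ∀ i, f i < n},
    Submodule.map (descProd (fun i => A i ^ j.1 i) k N).mulVecLin
      (LinearMap.range (B k).mulVecLin)

/-- The nested subspaces `Φ_{0,j} = range B_j`, `Φ_{i,j} = A_j · (Σ_{k=0}^{j} Φ_{i-1,k})`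
(subsystems indexed from `0`). -/
def phiSub {n : ℕ} (m : ℕ → ℕ) (A : ℕ → Matrix (Fin n) (Fin n) ℝ)
    (B : ∀ i, Matrix (Fin n) (Fin (m i)) ℝ) : ℕ → ℕ → Submodule ℝ (Fin n → ℝ)
  | 0, j => LinearMap.range (B j).mulVecLin
  | i + 1, j => Submodule.map (A j).mulVecLin (⨆ k ∈ Finset.range (j + 1), phiSub m A B i k)

/-- `W_i = Σ_{k=0}^{i} Σ_{j=0}^{N-1} Φ_{k,j}`. -/
def WSub {n : ℕ} (N : ℕ) (m : ℕ → ℕ) (A : ℕ → Matrix (Fin n) (Fin n) ℝ)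
    (B : ∀ i, Matrix (Fin n) (Fin (m i)) ℝ) (i : ℕ) : Submodule ℝ (Fin n → ℝ) :=
  ⨆ k ∈ Finset.range (i + 1), ⨆ j ∈ Finset.range N, phiSub m A B k j

namespace MyAux

open Matrix
lemma descProd_self {n : ℕ} (E : ℕ → Matrix (Fin n) (Fin n) ℝ) (a : ℕ) :
    descProd E a a = 1 := by
  cases a with
  | zero => rfl
  | succ b => simp [descProd]

lemma descProd_succ {n : ℕ} (E : ℕ → Matrix (Fin n) (Fin n) ℝ) {a b : ℕ} (h : a ≤ b) :
    descProd E a (b + 1) = E b * descProd E a b := by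
  simp [descProd, h]

lemma descProd_congr {n : ℕ} (E E' : ℕ → Matrix (Fin n) (Fin n) ℝ) (a : ℕ) :
    ∀ b, (∀ i, a ≤ i → i < b → E i = E' i) → descProd E a b = descProd E' a b := by
  intro b
  induction b with
  | zero => intro _; rfl
  | succ b ih =>
    intro h
    by_cases hab : a ≤ b
    · rw [descProd_succ E hab, descProd_succ E' hab, h b hab (Nat.lt_succ_self b),
        ih (fun i hi hib => h i hi (Nat.lt_succ_of_lt hib))]
    · simp [descProd, hab]

lemma descProd_of_one_above {n : ℕ} (E : ℕ → Matrix (Fin n) (Fin n) ℝ) {a b : ℕ} (hab : a ≤ b) :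
    ∀ c, b ≤ c → (∀ i, b ≤ i → i < c → E i = 1) → descProd E a c = descProd E a b := by
  intro c
  induction c with
  | zero => intro hc _; rw [Nat.le_zero.mp hc]
  | succ c ih =>
    intro hc h
    rcases Nat.lt_or_ge b (c+1) with hlt | hge
    · have hbc : b ≤ c := Nat.lt_succ_iff.mp hlt
      rw [descProd_succ E (le_trans hab hbc), h c hbc (Nat.lt_succ_self c),
        ih hbc (fun i hi hic => h i hi (Nat.lt_succ_of_lt hic)), one_mul]
    · rw [Nat.le_antisymm hc hge]

lemma pow_card_eq {n : ℕ} (A : Matrix (Fin n) (Fin n) ℝ) :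
    A ^ n = ∑ i ∈ Finset.range n, (-(A.charpoly.coeff i)) • A ^ i := by
  have h0 : Polynomial.aeval A A.charpoly = 0 := A.aeval_self_charpoly
  rw [Polynomial.aeval_eq_sum_range] at h0
  rw [Matrix.charpoly_natDegree_eq_dim, Fintype.card_fin] at h0
  rw [Finset.sum_range_succ] at h0
  have hc : A.charpoly.coeff n = 1 := by
    have hm := A.charpoly_monic
    have hd : A.charpoly.natDegree = n := by
      rw [Matrix.charpoly_natDegree_eq_dim, Fintype.card_fin]
    calc A.charpoly.coeff n = A.charpoly.coeff A.charpoly.natDegree := by rw [hd]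
      _ = 1 := hm.coeff_natDegree
  rw [hc, one_smul] at h0
  have h1 : A ^ n = -∑ i ∈ Finset.range n, A.charpoly.coeff i • A ^ i := by
    linear_combination (norm := abel) h0
  rw [h1, ← Finset.sum_neg_distrib]
  exact Finset.sum_congr rfl (fun i _ => (neg_smul _ _).symm)

lemma sum_mulVec {ι : Type*} {n : ℕ} (s : Finset ι) (M : ι → Matrix (Fin n) (Fin n) ℝ)
    (v : Fin n → ℝ) : (∑ i ∈ s, M i) *ᵥ v = ∑ i ∈ s, M i *ᵥ v :=
  map_sum (AddMonoidHom.mk' (fun M => M *ᵥ v) (fun A B => Matrix.add_mulVec A B v)) M s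

lemma pow_map_le {n : ℕ} (A : Matrix (Fin n) (Fin n) ℝ)
    (V : Submodule ℝ (Fin n → ℝ)) (k : ℕ) (hk0 : 0 < n) :
    Submodule.map ((A ^ k).mulVecLin) V ≤
      ⨆ t ∈ Finset.range n, Submodule.map ((A ^ t).mulVecLin) V := by
  induction k using Nat.strong_induction_on with
  | _ k ih =>
  rcases Nat.lt_or_ge k n with hk | hk
  · exact le_biSup (fun t => Submodule.map ((A ^ t).mulVecLin) V) (Finset.mem_range.mpr hk)
  · rintro x ⟨v, hv, rfl⟩
    have hEq : A ^ k = ∑ t ∈ Finset.range n, (-(A.charpoly.coeff t)) • A ^ (k - n + t) := by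
      have h2 : A ^ k = A ^ (k - n) * A ^ n := by
        rw [← pow_add]; congr 1; omega
      rw [h2, pow_card_eq A, Finset.mul_sum]
      exact Finset.sum_congr rfl (fun t _ => by rw [Matrix.mul_smul, ← pow_add])
    rw [Matrix.mulVecLin_apply, hEq, sum_mulVec]
    refine Submodule.sum_mem _ (fun t ht => ?_)
    have ht' : t < n := Finset.mem_range.mp ht
    rw [Matrix.smul_mulVec]
    refine Submodule.smul_mem _ _ ?_
    have := ih (k - n + t) (by omega) ⟨v, hv, rfl⟩
    rwa [Matrix.mulVecLin_apply] at this
/-- Truncated version of `Ω̄`: products of top index `≤ j`. -/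
def Psub {n : ℕ} (m : ℕ → ℕ) (A : ℕ → Matrix (Fin n) (Fin n) ℝ)
    (B : ∀ i, Matrix (Fin n) (Fin (m i)) ℝ) (j : ℕ) : Submodule ℝ (Fin n → ℝ) :=
  ⨆ k ∈ Finset.range (j + 1), ⨆ f : {f : ℕ → ℕ // ∀ i, f i < n},
    Submodule.map (descProd (fun i => A i ^ f.1 i) k (j + 1)).mulVecLin
      (LinearMap.range (B k).mulVecLin)

variable {n N : ℕ} {m : ℕ → ℕ} {A : ℕ → Matrix (Fin n) (Fin n) ℝ}
  {B : ∀ i, Matrix (Fin n) (Fin (m i)) ℝ}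

lemma le_Psub (hn : 0 < n) {k j : ℕ} (hk : k ≤ j) (f : ℕ → ℕ) (hf : ∀ i, i < j + 1 → f i < n) :
    Submodule.map (descProd (fun i => A i ^ f i) k (j + 1)).mulVecLin
      (LinearMap.range (B k).mulVecLin) ≤ Psub m A B j := by
  set f' : ℕ → ℕ := fun i => if i < j + 1 then f i else 0 with hf'
  have hfn : ∀ i, f' i < n := by
    intro i; by_cases h : i < j + 1 <;> rw [Nat.lt_succ_iff] at h <;> simp [hf', h, hn, hf]
  have heq : descProd (fun i => A i ^ f i) k (j + 1)
      = descProd (fun i => A i ^ f' i) k (j + 1) := by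
    refine descProd_congr _ _ _ _ (fun i _ hib => ?_)
    simp [hf', hib, Nat.lt_succ_iff.mp hib]
  rw [heq]
  refine le_trans ?_ (le_biSup _ (Finset.mem_range.mpr (Nat.lt_succ_of_le hk)))
  exact le_iSup (fun g : {f : ℕ → ℕ // ∀ i, f i < n} =>
    Submodule.map (descProd (fun i => A i ^ g.1 i) k (j + 1)).mulVecLin
      (LinearMap.range (B k).mulVecLin)) ⟨f', hfn⟩

lemma Psub_mono (hn : 0 < n) {j j' : ℕ} (h : j ≤ j') : Psub m A B j ≤ Psub m A B j' := by
  refine iSup₂_le (fun k hk => iSup_le (fun f => ?_))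
  have hk' : k ≤ j := Nat.lt_succ_iff.mp (Finset.mem_range.mp hk)
  set g : ℕ → ℕ := fun i => if i < j + 1 then f.1 i else 0 with hg
  have heq : descProd (fun i => A i ^ f.1 i) k (j + 1)
      = descProd (fun i => A i ^ g i) k (j' + 1) := by
    rw [descProd_of_one_above (fun i => A i ^ g i)
        (le_trans hk' (Nat.le_succ j)) (j' + 1) (by omega)
        (fun i hi _ => by
          have hni : ¬ i < j + 1 := by omega
          show A i ^ g i = 1
          rw [hg]; simp [hni])]
    refine descProd_congr _ _ _ _ (fun i _ hib => by simp [hg, hib, Nat.lt_succ_iff.mp hib])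
  calc Submodule.map (descProd (fun i => A i ^ f.1 i) k (j + 1)).mulVecLin
        (LinearMap.range (B k).mulVecLin)
      = Submodule.map (descProd (fun i => A i ^ g i) k (j' + 1)).mulVecLin
        (LinearMap.range (B k).mulVecLin) := by rw [heq]
    _ ≤ _ := le_Psub hn (le_trans hk' h) g
        (fun i _ => by by_cases hij : i < j + 1 <;> rw [Nat.lt_succ_iff] at hij <;> simp [hg, hij, hn, f.2])

lemma Psub_le_omegaBar (hn : 0 < n) {j : ℕ} (hj : j < N) :
    Psub m A B j ≤ omegaBar N m A B := by
  refine iSup₂_le (fun k hk => iSup_le (fun f => ?_))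
  have hk' : k ≤ j := Nat.lt_succ_iff.mp (Finset.mem_range.mp hk)
  set g : ℕ → ℕ := fun i => if i < j + 1 then f.1 i else 0 with hg
  have hgn : ∀ i, g i < n := by
    intro i; by_cases h : i < j + 1 <;> rw [Nat.lt_succ_iff] at h <;> simp [hg, h, hn, f.2]
  have heq : descProd (fun i => A i ^ f.1 i) k (j + 1)
      = descProd (fun i => A i ^ g i) k N := by
    rw [descProd_of_one_above (fun i => A i ^ g i)
        (le_trans hk' (Nat.le_succ j)) N (by omega)
        (fun i hi _ => by
          have hni : ¬ i < j + 1 := by omega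
          show A i ^ g i = 1
          rw [hg]; simp [hni])]
    refine descProd_congr _ _ _ _ (fun i _ hib => by simp [hg, hib, Nat.lt_succ_iff.mp hib])
  rw [heq]
  refine le_trans ?_ (le_biSup _ (Finset.mem_range.mpr (lt_of_le_of_lt hk' hj)))
  exact le_iSup (fun g : {f : ℕ → ℕ // ∀ i, f i < n} =>
    Submodule.map (descProd (fun i => A i ^ g.1 i) k N).mulVecLin
      (LinearMap.range (B k).mulVecLin)) ⟨g, hgn⟩
lemma helper_pow (hn : 0 < n) {k j : ℕ} (hk : k ≤ j) (f : ℕ → ℕ)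
    (hf : ∀ i, i < j → f i < n) (e : ℕ) :
    Submodule.map ((A j ^ e * descProd (fun i => A i ^ f i) k j).mulVecLin)
      (LinearMap.range (B k).mulVecLin) ≤ Psub m A B j := by
  rw [Matrix.mulVecLin_mul, Submodule.map_comp]
  refine le_trans (pow_map_le (A j) _ e hn) (iSup₂_le (fun t ht => ?_))
  have htn : t < n := Finset.mem_range.mp ht
  rw [← Submodule.map_comp, ← Matrix.mulVecLin_mul]
  set f' : ℕ → ℕ := fun i => if i = j then t else f i with hf'
  have heq : A j ^ t * descProd (fun i => A i ^ f i) k j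
      = descProd (fun i => A i ^ f' i) k (j + 1) := by
    rw [descProd_succ _ hk]
    have h1 : A j ^ f' j = A j ^ t := by simp [hf']
    have h2 : descProd (fun i => A i ^ f i) k j
        = descProd (fun i => A i ^ f' i) k j := by
      refine descProd_congr _ _ _ _ (fun i _ hij => ?_)
      have : ¬ i = j := by omega
      simp [hf', this]
    rw [h1, h2]
  rw [heq]
  refine le_Psub hn hk f' (fun i hij => ?_)
  by_cases h : i = j
  · simpa [hf', h] using htn
  · have : i < j := by omega
    simpa [hf', h] using hf i this

lemma mapA_Psub (hn : 0 < n) (j : ℕ) :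
    Submodule.map (A j).mulVecLin (Psub m A B j) ≤ Psub m A B j := by
  rw [Psub, Submodule.map_iSup]
  refine iSup_le (fun k => ?_)
  rw [Submodule.map_iSup]
  refine iSup_le (fun hk => ?_)
  rw [Submodule.map_iSup]
  refine iSup_le (fun f => ?_)
  have hk' : k ≤ j := Nat.lt_succ_iff.mp (Finset.mem_range.mp hk)
  rw [← Submodule.map_comp, ← Matrix.mulVecLin_mul]
  have heq : A j * descProd (fun i => A i ^ f.1 i) k (j + 1)
      = A j ^ (f.1 j + 1) * descProd (fun i => A i ^ f.1 i) k j := by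
    rw [descProd_succ _ hk', ← mul_assoc, pow_succ']
  rw [heq]
  exact helper_pow hn hk' f.1 (fun i _ => f.2 i) (f.1 j + 1)

lemma phi_le_Psub (hn : 0 < n) : ∀ i j, phiSub m A B i j ≤ Psub m A B j := by
  intro i
  induction i with
  | zero =>
    intro j
    have h1 : descProd (fun i => A i ^ (fun _ => 0 : ℕ → ℕ) i) j (j + 1) = 1 := by
      rw [descProd_succ _ le_rfl, descProd_self]
      simp
    have := le_Psub (m := m) (A := A) (B := B) hn (le_refl j) (fun _ => 0)
      (fun i _ => hn)
    rw [h1, Matrix.mulVecLin_one, Submodule.map_id] at this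
    exact this
  | succ i ih =>
    intro j
    show Submodule.map (A j).mulVecLin (⨆ k ∈ Finset.range (j + 1), phiSub m A B i k)
      ≤ Psub m A B j
    refine le_trans (Submodule.map_mono ?_) (mapA_Psub hn j)
    refine iSup₂_le (fun k hk => ?_)
    exact le_trans (ih k) (Psub_mono hn (Nat.lt_succ_iff.mp (Finset.mem_range.mp hk)))

lemma WSub_le_omegaBar (hn : 0 < n) (i : ℕ) : WSub N m A B i ≤ omegaBar N m A B := by
  refine iSup₂_le (fun k _ => iSup₂_le (fun j hj => ?_))
  exact le_trans (phi_le_Psub hn k j)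
    (Psub_le_omegaBar hn (Finset.mem_range.mp hj))
lemma pow_biSup_phi_le (b : ℕ) : ∀ (e l : ℕ),
    Submodule.map ((A b ^ e).mulVecLin) (⨆ j ∈ Finset.range (b + 1), phiSub m A B l j)
      ≤ ⨆ j ∈ Finset.range (b + 1), phiSub m A B (l + e) j := by
  intro e
  induction e with
  | zero =>
    intro l
    simp [pow_zero, Matrix.mulVecLin_one, Submodule.map_id]
  | succ e ih =>
    intro l
    have h1 : A b ^ (e + 1) = A b ^ e * A b := pow_succ _ _
    rw [h1, Matrix.mulVecLin_mul, Submodule.map_comp]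
    have h2 : Submodule.map (A b).mulVecLin (⨆ j ∈ Finset.range (b + 1), phiSub m A B l j)
        = phiSub m A B (l + 1) b := rfl
    rw [h2]
    have h3 : phiSub m A B (l + 1) b ≤ ⨆ j ∈ Finset.range (b + 1), phiSub m A B (l + 1) j :=
      le_biSup _ (Finset.mem_range.mpr (Nat.lt_succ_self b))
    refine le_trans (Submodule.map_mono h3) (le_trans (ih (l + 1)) ?_)
    have : l + 1 + e = l + (e + 1) := by omega
    rw [this]

lemma descProd_le_phi {k : ℕ} (hkN : k < N) (f : ℕ → ℕ) :
    ∀ b, k ≤ b → b ≤ N →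
    Submodule.map (descProd (fun i => A i ^ f i) k b).mulVecLin
        (LinearMap.range (B k).mulVecLin)
      ≤ ⨆ j ∈ Finset.range (min (b + 1) N), phiSub m A B (∑ i ∈ Finset.Ico k b, f i) j := by
  intro b hb
  induction b, hb using Nat.le_induction with
  | base =>
    intro _
    rw [descProd_self, Matrix.mulVecLin_one, Submodule.map_id, Finset.Ico_self,
      Finset.sum_empty]
    have hr : LinearMap.range (B k).mulVecLin = phiSub m A B 0 k := rfl
    rw [hr]
    exact le_biSup (fun j => phiSub m A B 0 j)
      (Finset.mem_range.mpr (lt_min (Nat.lt_succ_self k) hkN))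
  | succ b hb ih =>
    intro hbN
    have hbN' : b < N := hbN
    have hmin : min (b + 1) N = b + 1 := Nat.min_eq_left hbN
    rw [descProd_succ _ hb, Matrix.mulVecLin_mul, Submodule.map_comp]
    have step1 := Submodule.map_mono (f := (A b ^ f b).mulVecLin) (ih (le_of_lt hbN'))
    rw [hmin] at step1
    refine le_trans step1 (le_trans (pow_biSup_phi_le b (f b) _) ?_)
    rw [Finset.sum_Ico_succ_top hb]
    refine iSup₂_le (fun j hj => le_biSup _ ?_)
    have : j < b + 1 := Finset.mem_range.mp hj
    exact Finset.mem_range.mpr (lt_min (by omega) (lt_of_lt_of_le this hbN))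

lemma omegaBar_le_WSub (hN : 1 ≤ N) :
    omegaBar N m A B ≤ WSub N m A B (N * (n - 1)) := by
  refine iSup₂_le (fun k hk => iSup_le (fun f => ?_))
  have hkN : k < N := Finset.mem_range.mp hk
  have h1 := descProd_le_phi (m := m) (A := A) (B := B) hkN f.1 N hkN.le le_rfl
  rw [Nat.min_eq_right (Nat.le_succ N)] at h1
  refine le_trans h1 ?_
  set L := ∑ i ∈ Finset.Ico k N, f.1 i with hL
  have hLle : L ≤ N * (n - 1) := by
    have h2 : L ≤ (Finset.Ico k N).card * (n - 1) := by
      rw [hL]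
      calc ∑ i ∈ Finset.Ico k N, f.1 i ≤ ∑ _i ∈ Finset.Ico k N, (n - 1) :=
            Finset.sum_le_sum (fun i _ => Nat.le_pred_of_lt (f.2 i))
        _ = (Finset.Ico k N).card * (n - 1) := by rw [Finset.sum_const, smul_eq_mul]
    refine le_trans h2 ?_
    rw [Nat.card_Ico]
    exact Nat.mul_le_mul_right _ (by omega)
  exact le_biSup (fun l => ⨆ j ∈ Finset.range N, phiSub m A B l j)
    (Finset.mem_range.mpr (Nat.lt_succ_of_le hLle))

lemma WSub_mono {i j : ℕ} (h : i ≤ j) : WSub N m A B i ≤ WSub N m A B j := by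
  refine iSup₂_le (fun k hk => le_biSup (fun l => ⨆ j ∈ Finset.range N, phiSub m A B l j) ?_)
  have : k < i + 1 := Finset.mem_range.mp hk
  exact Finset.mem_range.mpr (by omega)

end MyAux

/-- The sequence `(W_i)` is increasing, stabilizes at index `N(n-1)`, and
`W_{N(n-1)} = Ω̄`. -/
theorem WSub_mono_stabilizes_eq_omegaBar {n N : ℕ} (hN : 1 ≤ N) (m : ℕ → ℕ)
    (A : ℕ → Matrix (Fin n) (Fin n) ℝ) (B : ∀ i, Matrix (Fin n) (Fin (m i)) ℝ) :
    (∀ i, WSub N m A B i ≤ WSub N m A B (i + 1)) ∧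
    (∀ j, N * (n - 1) ≤ j → WSub N m A B j = WSub N m A B (N * (n - 1))) ∧
    WSub N m A B (N * (n - 1)) = omegaBar N m A B := by
  rcases Nat.eq_zero_or_pos n with hn | hn
  · subst hn
    haveI : Subsingleton (Fin 0 → ℝ) := ⟨fun a b => funext (fun i => i.elim0)⟩
    haveI : Subsingleton (Submodule ℝ (Fin 0 → ℝ)) := (Submodule.subsingleton_iff ℝ).mpr this
    exact ⟨fun i => le_of_eq (Subsingleton.elim _ _), fun j _ => Subsingleton.elim _ _,
      Subsingleton.elim _ _⟩
  · have h1 : ∀ i, WSub N m A B i ≤ omegaBar N m A B := MyAux.WSub_le_omegaBar hn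
    have h2 : omegaBar N m A B ≤ WSub N m A B (N * (n - 1)) := MyAux.omegaBar_le_WSub hN
    refine ⟨fun i => MyAux.WSub_mono (Nat.le_succ i), fun j hj => ?_, ?_⟩
    · exact le_antisymm (le_trans (h1 j) h2) (MyAux.WSub_mono hj)
    · exact le_antisymm (h1 (N * (n - 1))) h2
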